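/- Differential privacy as a conditional-PML constraint under all full-support priors: For every ε ≥ 0, the mechanism p satisfies ε-differential privacy if and only if for every full-support prior q on 𝒟^n, every y ∈ 𝒴, every i ∈ [n], and every x ∈ 𝒟^n: p(x)(y) · Σ_{d''∈𝒟} q(x[i↦d'']) ≤ e^ε · Σ_{d'∈𝒟} p(x[i↦d'])(y) · q(x[i↦d']). (The displayed inequality is the conditional pointwise-maximal-leakage constraint ℓ(D_i → y | x_{−i}) ≤ ε, written in multiplied-out form.) -/

import Mathlib

open Finset

/-- A probability mass function on a finite type. -/
def IsPMF {α : Type*} [Fintype α] (p : α → ℝ) : Prop :=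
  (∀ a, 0 ≤ p a) ∧ ∑ a, p a = 1

/-- A mechanism on databases: a conditional pmf from `𝒟^n` to `𝒴`. -/
def IsMechanism {𝒟 𝒴 : Type*} [Fintype 𝒴] {n : ℕ}
    (p : (Fin n → 𝒟) → 𝒴 → ℝ) : Prop :=
  ∀ x, (∀ y, 0 ≤ p x y) ∧ ∑ y, p x y = 1

/-- `ε`-differential privacy. -/
def DiffPrivate {𝒟 𝒴 : Type*} {n : ℕ} (p : (Fin n → 𝒟) → 𝒴 → ℝ) (ε : ℝ) : Prop :=
  ∀ (x : Fin n → 𝒟) (i : Fin n) (d' : 𝒟) (y : 𝒴),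
    p x y ≤ Real.exp ε * p (Function.update x i d') y

/-- `ε`-free-lunch privacy. -/
def FreeLunch {𝒟 𝒴 : Type*} {n : ℕ} (p : (Fin n → 𝒟) → 𝒴 → ℝ) (ε : ℝ) : Prop :=
  ∀ (x x' : Fin n → 𝒟) (y : 𝒴), p x y ≤ Real.exp ε * p x' y

/-- **Differential privacy as a conditional-PML constraint under all full-support
priors.** The mechanism `p` satisfies `ε`-differential privacy iff for every
full-support prior `q`, every outcome `y`, every coordinate `i`, and every database `x`,
`p(x)(y) · Σ_{d''} q(x[i↦d'']) ≤ e^ε · Σ_{d'} p(x[i↦d'])(y) · q(x[i↦d'])`,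
i.e. the conditional PML constraint `ℓ(D_i → y ∣ x_{−i}) ≤ ε` holds. -/
theorem dp_iff_conditional_pml_all_priors
    {𝒟 𝒴 : Type*} [Fintype 𝒟] [Fintype 𝒴] [Nonempty 𝒴]
    (hD : 2 ≤ Fintype.card 𝒟) {n : ℕ} (hn : 1 ≤ n)
    (p : (Fin n → 𝒟) → 𝒴 → ℝ) (hp : IsMechanism p)
    (ε : ℝ) (hε : 0 ≤ ε) :
    DiffPrivate p ε ↔
      ∀ q : (Fin n → 𝒟) → ℝ, IsPMF q → (∀ x, 0 < q x) →
        ∀ (y : 𝒴) (i : Fin n) (x : Fin n → 𝒟),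
          p x y * (∑ d'' : 𝒟, q (Function.update x i d'')) ≤
            Real.exp ε *
              ∑ d' : 𝒟, p (Function.update x i d') y * q (Function.update x i d') := by
  
  constructor
  · intro hdp q hq hqpos y i x
    calc p x y * ∑ d'' : 𝒟, q (Function.update x i d'')
        = ∑ d'' : 𝒟, p x y * q (Function.update x i d'') := by rw [Finset.mul_sum]
      _ ≤ ∑ d'' : 𝒟, (Real.exp ε * p (Function.update x i d'') y) * q (Function.update x i d'') := by
          refine Finset.sum_le_sum fun d _ => ?_
          exact mul_le_mul_of_nonneg_right (hdp x i d y) (hq.1 _)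
      _ = Real.exp ε * ∑ d' : 𝒟, p (Function.update x i d') y * q (Function.update x i d') := by
          rw [Finset.mul_sum]; exact Finset.sum_congr rfl fun d _ => by ring
  · intro h x i d' y
    classical
    set x' := Function.update x i d' with hx'
    have hDne : Nonempty 𝒟 := Fintype.card_pos_iff.mp (by omega)
    have hNpos : (0:ℝ) < (Fintype.card (Fin n → 𝒟) : ℝ) := by
      exact_mod_cast Fintype.card_pos
    set N : ℝ := (Fintype.card (Fin n → 𝒟) : ℝ) with hN
    have hp1 : ∀ z y', p z y' ≤ 1 := by
      intro z y'
      calc p z y' ≤ ∑ y'', p z y'' :=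
            Finset.single_le_sum (fun a _ => (hp z).1 a) (Finset.mem_univ y')
        _ = 1 := (hp z).2
    set M : ℝ := (Fintype.card 𝒟 : ℝ) / N with hM
    have hcardD : (0:ℝ) < (Fintype.card 𝒟 : ℝ) := by exact_mod_cast Fintype.card_pos
    have hMpos : 0 < M := div_pos hcardD hNpos
    have hupd : ∀ d'' : 𝒟, (Function.update x i d'' = x') ↔ d'' = d' := by
      intro d''
      constructor
      · intro hh
        have := congrFun hh i
        simpa [hx'] using this
      · rintro rfl; rfl
    have expos := Real.exp_pos ε
    have key : ∀ δ : ℝ, 0 < δ → δ ≤ 1/2 →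
        (1 - δ) * (p x y - Real.exp ε * p x' y) ≤ δ * (Real.exp ε * M) := by
      intro δ hδ hδ2
      have hδ1 : δ < 1 := by linarith
      set q : (Fin n → 𝒟) → ℝ := fun z => δ / N + (1 - δ) * (if z = x' then 1 else 0) with hqdef
      have hqnn : ∀ z, 0 < q z := by
        intro z
        have h1 : 0 < δ / N := div_pos hδ hNpos
        have h2 : 0 ≤ (1 - δ) * (if z = x' then 1 else 0) := by
          refine mul_nonneg (by linarith) ?_
          split <;> norm_num
        simp only [hqdef]; linarith
      have hq : IsPMF q := by
        constructor
        · intro a; exact (hqnn a).le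
        · simp only [hqdef]
          rw [Finset.sum_add_distrib, Finset.sum_const, ← Finset.mul_sum,
            Finset.sum_ite_eq' Finset.univ x' (fun _ => (1:ℝ))]
          simp [hN]
          field_simp
          ring
      have H := h q hq hqnn y i x
      have hsum1 : ∑ d'' : 𝒟, q (Function.update x i d'') = δ * M + (1 - δ) := by
        simp only [hqdef, hupd]
        rw [Finset.sum_add_distrib, Finset.sum_const, ← Finset.mul_sum,
          Finset.sum_ite_eq' Finset.univ d' (fun _ => (1:ℝ))]
        simp [hM]
        ring
      have hsum2 : ∑ d'' : 𝒟, p (Function.update x i d'') y * q (Function.update x i d'')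
          ≤ δ * M + (1 - δ) * p x' y := by
        have : ∀ d'' : 𝒟, p (Function.update x i d'') y * q (Function.update x i d'')
            = p (Function.update x i d'') y * (δ / N)
              + (1 - δ) * (if d'' = d' then p (Function.update x i d'') y else 0) := by
          intro d''
          simp only [hqdef, hupd]
          by_cases hc : d'' = d' <;> simp [hc] <;> ring
        rw [Finset.sum_congr rfl fun d'' _ => this d'', Finset.sum_add_distrib,
          ← Finset.mul_sum]
        have hA : ∑ d'' : 𝒟, p (Function.update x i d'') y * (δ / N) ≤ δ * M := by
          calc ∑ d'' : 𝒟, p (Function.update x i d'') y * (δ / N)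
              ≤ ∑ _d'' : 𝒟, 1 * (δ / N) := by
                refine Finset.sum_le_sum fun d _ => ?_
                exact mul_le_mul_of_nonneg_right (hp1 _ _) (div_pos hδ hNpos).le
            _ = (Fintype.card 𝒟 : ℝ) * (δ / N) := by
                rw [Finset.sum_const]; simp
            _ = δ * M := by rw [hM]; ring
        have hB : (1 - δ) * ∑ d'' : 𝒟, (if d'' = d' then p (Function.update x i d'') y else 0)
            = (1 - δ) * p x' y := by
          rw [Finset.sum_ite_eq' Finset.univ d']
          simp [hx']
        linarith
      rw [hsum1] at H
      have hRHS : Real.exp ε * ∑ d'' : 𝒟, p (Function.update x i d'') y * q (Function.update x i d'')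
          ≤ Real.exp ε * (δ * M + (1 - δ) * p x' y) :=
        mul_le_mul_of_nonneg_left hsum2 expos.le
      have hLHS : p x y * (1 - δ) ≤ p x y * (δ * M + (1 - δ)) := by
        have := (hp x).1 y
        nlinarith [mul_nonneg this (mul_nonneg hδ.le hMpos.le)]
      nlinarith
    by_contra hcon
    push_neg at hcon
    set A : ℝ := p x y - Real.exp ε * p x' y with hA
    have hApos : 0 < A := by simp only [hA]; linarith
    set K : ℝ := Real.exp ε * M with hK
    have hKpos : 0 < K := mul_pos expos hMpos
    set δ : ℝ := min (A / (4 * K)) (1/2) with hδdef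
    have hδpos : 0 < δ := lt_min (div_pos hApos (by linarith)) (by norm_num)
    have hδ2 : δ ≤ 1/2 := min_le_right _ _
    have hkey := key δ hδpos hδ2
    have h1 : δ ≤ A / (4 * K) := min_le_left _ _
    have h2 : δ * K ≤ A / 4 := by
      calc δ * K ≤ (A / (4 * K)) * K := mul_le_mul_of_nonneg_right h1 hKpos.le
        _ = A / 4 := by field_simp
    nlinarith
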